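/- Fix nonnegative integers n, n₁, N with n₁ ≤ n. The number of partitions of N of the form N = n₁(n₁+1) + 2(b₁ + ⋯ + b_{n₁}) with n−n₁ ≥ b₁ ≥ ⋯ ≥ b_{n₁} ≥ 0 equals the number of partitions of N with largest part at most n+1, at most n parts, exactly n₁ diagonal hooks, and all successive ranks equal to 1. -/

import Mathlib

/-- Length of the `l`-th column (1-indexed) of the Ferrers diagram:
the number of parts that are `≥ l`. -/
def colLen {N : ℕ} (p : Nat.Partition N) (l : ℕ) : ℕ :=
  (p.parts.filter (fun x => l ≤ x)).card

/-- Length of the `l`-th row (1-indexed) of the Ferrers diagram, i.e. the `l`-th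
largest part: the number of columns of length `≥ l`. -/
def rowLen {N : ℕ} (p : Nat.Partition N) (l : ℕ) : ℕ :=
  ((Finset.range (N + 1)).filter (fun m => l ≤ colLen p (m + 1))).card

/-- The number of diagonal hooks (right angles) = size of the Durfee square. -/
def durfee {N : ℕ} (p : Nat.Partition N) : ℕ :=
  ((Finset.range (N + 1)).filter (fun l => l + 1 ≤ rowLen p (l + 1))).card

/-- The `l`-th successive rank (1-indexed): length of the `l`-th row minus length
of the `l`-th column. -/
def srank {N : ℕ} (p : Nat.Partition N) (l : ℕ) : ℤ :=
  (rowLen p l : ℤ) - (colLen p l : ℤ)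

def extb (n₁ : ℕ) (b : Fin n₁ → ℕ) (m : ℕ) : ℕ := if h : m < n₁ then b ⟨m, h⟩ else 0

lemma colLen_anti {N : ℕ} (p : Nat.Partition N) : Antitone (colLen p) := by
  intro a b hab
  exact Multiset.card_le_card (Multiset.monotone_filter_right _ (fun x hx => hab.trans hx))

lemma colLen_le_card {N : ℕ} (p : Nat.Partition N) (m : ℕ) :
    colLen p m ≤ Multiset.card p.parts :=
  Multiset.card_le_card (Multiset.filter_le _ _)

lemma card_le_N {N : ℕ} (p : Nat.Partition N) : Multiset.card p.parts ≤ N := by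
  have : Multiset.card p.parts = (p.parts.map (fun _ => 1)).sum := by
    simp
  calc Multiset.card p.parts = (p.parts.map (fun _ => 1)).sum := this
    _ ≤ (p.parts.map id).sum :=
        Multiset.sum_map_le_sum_map _ _ (fun x hx => p.parts_pos hx)
    _ = p.parts.sum := by rw [Multiset.map_id]
    _ = N := p.parts_sum

lemma part_le_N {N : ℕ} (p : Nat.Partition N) {x : ℕ} (hx : x ∈ p.parts) : x ≤ N := by
  rw [← p.parts_sum]
  exact Multiset.le_sum_of_mem hx

lemma colLen_eq_zero {N : ℕ} (p : Nat.Partition N) {m : ℕ} (hm : N < m) : colLen p m = 0 := by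
  rw [colLen, Multiset.card_eq_zero, Multiset.filter_eq_nil]
  exact fun x hx h => absurd ((h.trans (part_le_N p hx))) (by omega)

lemma colLen_one {N : ℕ} (p : Nat.Partition N) : colLen p 1 = Multiset.card p.parts := by
  rw [colLen]
  congr 1
  rw [Multiset.filter_eq_self]
  exact fun x hx => p.parts_pos hx

lemma duality {N : ℕ} (p : Nat.Partition N) {l m : ℕ} (hl : 1 ≤ l) (hm : 1 ≤ m) :
    m ≤ rowLen p l ↔ l ≤ colLen p m := by
  constructor
  · intro hr
    by_contra hc
    push_neg at hc
    have hsub : (Finset.range (N + 1)).filter (fun m' => l ≤ colLen p (m' + 1)) ⊆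
        Finset.range (m - 1) := by
      intro x hx
      simp only [Finset.mem_filter, Finset.mem_range] at hx ⊢
      by_contra hx2
      have : m ≤ x + 1 := by omega
      exact absurd (hx.2.trans (colLen_anti p this)) (by omega)
    have := Finset.card_le_card hsub
    rw [rowLen] at hr
    simp only [Finset.card_range] at this
    omega
  · intro hc
    have hmN : m ≤ N := by
      have h1 : 1 ≤ colLen p m := hl.trans hc
      by_contra hmN
      rw [colLen_eq_zero p (by omega)] at h1; omega
    have hsub : Finset.range m ⊆
        (Finset.range (N + 1)).filter (fun m' => l ≤ colLen p (m' + 1)) := by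
      intro x hx
      simp only [Finset.mem_filter, Finset.mem_range] at hx ⊢
      exact ⟨by omega, hc.trans (colLen_anti p (by omega))⟩
    have := Finset.card_le_card hsub
    rw [rowLen]
    simpa using this

lemma count_eq_colLen_sub {N : ℕ} (p : Nat.Partition N) {x : ℕ} (hx : 1 ≤ x) :
    Multiset.count x p.parts + colLen p (x + 1) = colLen p x := by
  rw [Multiset.count_eq_card_filter_eq, colLen, colLen, ← Multiset.card_add,
    Multiset.filter_add_filter]
  have h1 : Multiset.filter (fun a => x = a ∨ x + 1 ≤ a) p.parts
      = Multiset.filter (fun a => x ≤ a) p.parts := Multiset.filter_congr (by omega)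
  have h2 : Multiset.filter (fun a => x = a ∧ x + 1 ≤ a) p.parts = 0 := by
    rw [Multiset.filter_eq_nil]; omega
  rw [h1, h2]
  simp

lemma parts_ext {N : ℕ} (p q : Nat.Partition N)
    (h : ∀ m, 1 ≤ m → colLen p m = colLen q m) : p = q := by
  have : p.parts = q.parts := by
    ext x
    rcases Nat.eq_zero_or_pos x with rfl | hx
    · rw [Multiset.count_eq_zero_of_notMem, Multiset.count_eq_zero_of_notMem]
      · exact fun hmem => absurd (q.parts_pos hmem) (by omega)
      · exact fun hmem => absurd (p.parts_pos hmem) (by omega)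
    · have h1 := count_eq_colLen_sub p hx
      have h2 := count_eq_colLen_sub q hx
      have := h x hx
      have := h (x + 1) (by omega)
      omega
  cases p; cases q; simp_all

lemma sum_colLen_aux (K : ℕ) (s : Multiset ℕ) (hs : ∀ x ∈ s, x ≤ K) :
    ∑ m ∈ Finset.range K, (s.filter (fun x => m + 1 ≤ x)).card = s.sum := by
  induction s using Multiset.induction with
  | empty => simp
  | cons a s ih =>
    have ha : a ≤ K := hs a (Multiset.mem_cons_self a s)
    simp only [Multiset.filter_cons, Multiset.card_add, Multiset.sum_cons]
    rw [Finset.sum_add_distrib, ih (fun x hx => hs x (Multiset.mem_cons_of_mem hx))]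
    congr 1
    have : ∀ m, Multiset.card (if m + 1 ≤ a then ({a} : Multiset ℕ) else 0)
        = if m + 1 ≤ a then 1 else 0 := by
      intro m
      by_cases hm : m + 1 ≤ a <;> simp [hm]
    have h2 : Finset.filter (fun m => m + 1 ≤ a) (Finset.range K) = Finset.range a := by
      ext m; simp only [Finset.mem_filter, Finset.mem_range]; omega
    calc ∑ m ∈ Finset.range K, Multiset.card (if m + 1 ≤ a then ({a} : Multiset ℕ) else 0)
        = ∑ m ∈ Finset.range K, if m + 1 ≤ a then 1 else 0 :=
          Finset.sum_congr rfl (fun m _ => this m)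
      _ = (Finset.filter (fun m => m + 1 ≤ a) (Finset.range K)).card :=
          (Finset.card_filter _ _).symm
      _ = a := by rw [h2, Finset.card_range]

lemma sum_colLen {N : ℕ} (p : Nat.Partition N) :
    ∑ m ∈ Finset.range (N + 1), colLen p (m + 1) = N := by
  have := sum_colLen_aux (N + 1) p.parts (fun x hx => (part_le_N p hx).trans (by omega))
  calc ∑ m ∈ Finset.range (N + 1), colLen p (m + 1)
      = p.parts.sum := this
    _ = N := p.parts_sum


lemma card_fin_lt (n₁ k : ℕ) (hk : k ≤ n₁) :
    (Finset.univ.filter fun l : Fin n₁ => (l : ℕ) < k).card = k := by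
  rcases Nat.eq_zero_or_pos k with rfl | hk1
  · simp
  have hn₁ : 0 < n₁ := by omega
  apply le_antisymm
  · calc (Finset.univ.filter fun l : Fin n₁ => (l : ℕ) < k).card
        ≤ (Finset.range k).card := by
          refine Finset.card_le_card_of_injOn (fun l => (l : ℕ)) ?_ ?_
          · intro l hl
            simp only [Finset.mem_coe, Finset.mem_filter, Finset.mem_range] at hl ⊢
            exact hl.2
          · intro a _ b _ hab
            exact Fin.val_injective hab
      _ = k := Finset.card_range k
  · calc k = (Finset.range k).card := (Finset.card_range k).symm
      _ ≤ _ := by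
          refine Finset.card_le_card_of_injOn
            (fun j => (⟨min j (n₁ - 1), by omega⟩ : Fin n₁)) ?_ ?_
          · intro j hj
            simp only [Finset.mem_coe, Finset.mem_range] at hj
            simp only [Finset.mem_coe, Finset.mem_filter, Finset.mem_univ, true_and]
            show min j (n₁ - 1) < k
            omega
          · intro a ha b hb hab
            simp only [Finset.mem_coe, Finset.mem_range] at ha hb
            have : min a (n₁ - 1) = min b (n₁ - 1) := congrArg Fin.val hab
            omega

lemma card_filter_fin_le {n₁ : ℕ} (P : Fin n₁ → Prop) [DecidablePred P] :
    (Finset.univ.filter P).card ≤ n₁ := by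
  calc (Finset.univ.filter P).card ≤ Finset.univ.card := Finset.card_filter_le _ _
    _ = n₁ := by rw [Finset.card_univ, Fintype.card_fin]

lemma anti_count {n₁ : ℕ} {b : Fin n₁ → ℕ} (hb : Antitone b) {m v : ℕ}
    (hm : 1 ≤ m) (hmn : m ≤ n₁) :
    m ≤ (Finset.univ.filter fun l => v ≤ b l).card ↔ v ≤ extb n₁ b (m - 1) := by
  have hm1 : m - 1 < n₁ := by omega
  rw [extb, dif_pos hm1]
  constructor
  · intro hcard
    by_contra hc
    push_neg at hc
    have hsub : (Finset.univ.filter fun l => v ≤ b l) ⊆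
        (Finset.univ.filter fun l : Fin n₁ => (l : ℕ) < m - 1) := by
      intro l hl
      simp only [Finset.mem_filter, Finset.mem_univ, true_and] at hl ⊢
      by_contra hl2
      push_neg at hl2
      have : b l ≤ b ⟨m - 1, hm1⟩ := hb (by exact hl2)
      omega
    have := Finset.card_le_card hsub
    rw [card_fin_lt n₁ (m - 1) (by omega)] at this
    omega
  · intro hv
    calc m = (Finset.univ.filter fun l : Fin n₁ => (l : ℕ) < m).card :=
          (card_fin_lt n₁ m hmn).symm
      _ ≤ _ := by
          apply Finset.card_le_card
          intro l hl
          simp only [Finset.mem_filter, Finset.mem_univ, true_and] at hl ⊢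
          have : b ⟨m - 1, hm1⟩ ≤ b l := hb (by simp only [Fin.mk_le_mk, Fin.le_def]; omega)
          omega

lemma swap_count {n₁ : ℕ} (s : Finset ℕ) (P : Fin n₁ → ℕ → Prop)
    [∀ l j, Decidable (P l j)] :
    ∑ j ∈ s, (Finset.univ.filter fun l : Fin n₁ => P l j).card
      = ∑ l : Fin n₁, (s.filter fun j => P l j).card := by
  simp only [Finset.card_filter]
  rw [Finset.sum_comm]


def Mb (n n₁ : ℕ) (b : Fin n₁ → ℕ) : Multiset ℕ :=
  (Finset.univ.val.map fun l : Fin n₁ => n₁ + 1 + b l) +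
  (((Finset.range n).val.map fun j =>
      (Finset.univ.filter fun l : Fin n₁ => j + 1 ≤ b l).card).filter fun c => 1 ≤ c)

lemma Mb_pos (n n₁ : ℕ) (b : Fin n₁ → ℕ) : ∀ {x}, x ∈ Mb n n₁ b → 0 < x := by
  intro x hx
  rw [Mb, Multiset.mem_add] at hx
  rcases hx with hx | hx
  · obtain ⟨l, _, rfl⟩ := Multiset.mem_map.mp hx
    omega
  · have := (Multiset.mem_filter.mp hx).2
    omega

lemma Mb_mem_le (n n₁ : ℕ) (h : n₁ ≤ n) (b : Fin n₁ → ℕ) (hbn : ∀ l, b l ≤ n - n₁) :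
    ∀ x ∈ Mb n n₁ b, x ≤ n + 1 := by
  intro x hx
  rw [Mb, Multiset.mem_add] at hx
  rcases hx with hx | hx
  · obtain ⟨l, _, rfl⟩ := Multiset.mem_map.mp hx
    have := hbn l
    omega
  · obtain ⟨j, _, rfl⟩ := Multiset.mem_map.mp (Multiset.mem_of_mem_filter hx)
    have : (Finset.univ.filter fun l : Fin n₁ => j + 1 ≤ b l).card ≤ n₁ :=
      le_trans (Finset.card_filter_le _ _) (by simp)
    omega

lemma Mb_card_filter (n n₁ : ℕ) (h : n₁ ≤ n) (b : Fin n₁ → ℕ) (hb : Antitone b)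
    (hbn : ∀ l, b l ≤ n - n₁) {m : ℕ} (hm : 1 ≤ m) :
    (Multiset.filter (fun x => m ≤ x) (Mb n n₁ b)).card =
      if m ≤ n₁ then n₁ + extb n₁ b (m - 1)
      else (Finset.univ.filter fun l : Fin n₁ => m ≤ n₁ + 1 + b l).card := by
  rw [Mb, Multiset.filter_add, Multiset.card_add]
  have hA : (Multiset.filter (fun x => m ≤ x)
      (Finset.univ.val.map fun l : Fin n₁ => n₁ + 1 + b l)).card
      = (Finset.univ.filter fun l : Fin n₁ => m ≤ n₁ + 1 + b l).card := by
    rw [← Multiset.countP_eq_card_filter, Multiset.countP_map]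
    rfl
  have hB : (Multiset.filter (fun x => m ≤ x)
      ((((Finset.range n).val.map fun j =>
        (Finset.univ.filter fun l : Fin n₁ => j + 1 ≤ b l).card).filter fun c => 1 ≤ c))).card
      = ((Finset.range n).filter fun j =>
          m ≤ (Finset.univ.filter fun l : Fin n₁ => j + 1 ≤ b l).card).card := by
    rw [Multiset.filter_filter]
    have : ∀ x : ℕ, ((m ≤ x ∧ 1 ≤ x) ↔ m ≤ x) := by omega
    rw [Multiset.filter_congr (fun x _ => this x)]
    rw [← Multiset.countP_eq_card_filter, Multiset.countP_map]
    rfl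
  rw [hA, hB]
  by_cases hmn : m ≤ n₁
  · rw [if_pos hmn]
    have h1 : (Finset.univ.filter fun l : Fin n₁ => m ≤ n₁ + 1 + b l) = Finset.univ := by
      ext l; simp only [Finset.mem_filter, Finset.mem_univ, true_and, iff_true]; omega
    have h2 : ((Finset.range n).filter fun j =>
        m ≤ (Finset.univ.filter fun l : Fin n₁ => j + 1 ≤ b l).card)
        = Finset.range (extb n₁ b (m - 1)) := by
      ext j
      simp only [Finset.mem_filter, Finset.mem_range]
      rw [anti_count hb hm hmn]
      have hle : extb n₁ b (m - 1) ≤ n - n₁ := by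
        rw [extb]
        split
        · exact hbn _
        · omega
      omega
    rw [h1, h2, Finset.card_univ, Fintype.card_fin, Finset.card_range]
  · rw [if_neg hmn]
    have h2 : ((Finset.range n).filter fun j =>
        m ≤ (Finset.univ.filter fun l : Fin n₁ => j + 1 ≤ b l).card) = ∅ := by
      ext j
      simp only [Finset.mem_filter, Finset.mem_range, Finset.notMem_empty, iff_false, not_and]
      intro _
      have : (Finset.univ.filter fun l : Fin n₁ => j + 1 ≤ b l).card ≤ n₁ :=
        le_trans (Finset.card_filter_le _ _) (by simp)
      omega
    rw [h2, Finset.card_empty, add_zero]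

lemma Mb_sum (n n₁ : ℕ) (h : n₁ ≤ n) (b : Fin n₁ → ℕ) (hbn : ∀ l, b l ≤ n - n₁) :
    (Mb n n₁ b).sum = n₁ * (n₁ + 1) + 2 * ∑ l, b l := by
  rw [Mb, Multiset.sum_add]
  have hA : (Finset.univ.val.map fun l : Fin n₁ => n₁ + 1 + b l).sum
      = ∑ l : Fin n₁, (n₁ + 1 + b l) := rfl
  have hA2 : ∑ l : Fin n₁, (n₁ + 1 + b l) = n₁ * (n₁ + 1) + ∑ l, b l := by
    rw [Finset.sum_add_distrib, Finset.sum_const, Finset.card_univ, Fintype.card_fin,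
      smul_eq_mul]
  have hB : ((((Finset.range n).val.map fun j =>
      (Finset.univ.filter fun l : Fin n₁ => j + 1 ≤ b l).card).filter fun c => 1 ≤ c)).sum
      = ∑ l : Fin n₁, b l := by
    have hfil : ∀ s : Multiset ℕ, (s.filter fun c => 1 ≤ c).sum = s.sum := by
      intro s
      have := Multiset.sum_filter_add_sum_filter_not (s := s) (fun c => 1 ≤ c)
      have hz : (s.filter fun c => ¬ 1 ≤ c).sum = 0 :=
        Multiset.sum_eq_zero (fun x hx => by
          have := (Multiset.mem_filter.mp hx).2; omega)
      omega
    rw [hfil]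
    have : (((Finset.range n).val.map fun j =>
        (Finset.univ.filter fun l : Fin n₁ => j + 1 ≤ b l).card)).sum
        = ∑ j ∈ Finset.range n, (Finset.univ.filter fun l : Fin n₁ => j + 1 ≤ b l).card := rfl
    rw [this, swap_count]
    apply Finset.sum_congr rfl
    intro l _
    have : (Finset.range n).filter (fun j => j + 1 ≤ b l) = Finset.range (b l) := by
      ext j
      simp only [Finset.mem_filter, Finset.mem_range]
      have := hbn l
      omega
    rw [this, Finset.card_range]
  rw [hA, hA2, hB]
  ring


lemma durfee_eq {N : ℕ} (p : Nat.Partition N) :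
    durfee p = ((Finset.range (N + 1)).filter fun l => l + 1 ≤ colLen p (l + 1)).card := by
  rw [durfee]
  congr 1
  ext l
  simp only [Finset.mem_filter, Finset.mem_range, and_congr_right_iff]
  intro _
  exact duality p (by omega) (by omega)

lemma downclosed (S : Finset ℕ) (hS : ∀ l ∈ S, ∀ l' ≤ l, l' ∈ S) (k : ℕ) :
    k ∈ S ↔ k < S.card := by
  constructor
  · intro hk
    have hsub : Finset.range (k + 1) ⊆ S := by
      intro x hx
      exact hS k hk x (Nat.lt_succ_iff.mp (Finset.mem_range.mp hx))
    have := Finset.card_le_card hsub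
    simp only [Finset.card_range] at this
    omega
  · intro hk
    by_contra hc
    have hsub : S ⊆ Finset.range k := by
      intro x hx
      rw [Finset.mem_range]
      by_contra h2
      exact hc (hS x hx k (by omega))
    have := Finset.card_le_card hsub
    simp only [Finset.card_range] at this
    omega

lemma partition_ext {N : ℕ} (p q : Nat.Partition N) (h : p.parts = q.parts) : p = q := by
  cases p; cases q; simpa using h

lemma forward_props (n n₁ N : ℕ) (h : n₁ ≤ n) (b : Fin n₁ → ℕ) (hb : Antitone b)
    (hbn : ∀ l, b l ≤ n - n₁) (hN : N = n₁ * (n₁ + 1) + 2 * ∑ l, b l)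
    (P : Nat.Partition N) (hP : P.parts = Mb n n₁ b) :
    (∀ x ∈ P.parts, x ≤ n + 1) ∧ Multiset.card P.parts ≤ n ∧ durfee P = n₁ ∧
      ∀ l, 1 ≤ l → l ≤ n₁ → srank P l = 1 := by
  have hcol : ∀ m : ℕ, 1 ≤ m → colLen P m =
      if m ≤ n₁ then n₁ + extb n₁ b (m - 1)
      else (Finset.univ.filter fun l : Fin n₁ => m ≤ n₁ + 1 + b l).card := by
    intro m hm
    rw [colLen, hP]
    exact Mb_card_filter n n₁ h b hb hbn hm
  have hn₁N : n₁ ≤ N := by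
    have h1 : n₁ ≤ n₁ * (n₁ + 1) := Nat.le_mul_of_pos_right n₁ (by omega)
    rw [hN]
    exact le_trans h1 (Nat.le_add_right _ _)
  have hcard : Multiset.card P.parts ≤ n := by
    rw [← colLen_one P, hcol 1 le_rfl]
    by_cases h1 : 1 ≤ n₁
    · rw [if_pos h1]
      have hx : extb n₁ b (1 - 1) ≤ n - n₁ := by
        rw [extb]; split
        · exact hbn _
        · omega
      omega
    · rw [if_neg h1]
      have := card_filter_fin_le (fun l : Fin n₁ => 1 ≤ n₁ + 1 + b l)
      omega
  have hdur : durfee P = n₁ := by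
    rw [durfee_eq]
    have heq : ((Finset.range (N + 1)).filter fun l => l + 1 ≤ colLen P (l + 1))
        = Finset.range n₁ := by
      ext l
      simp only [Finset.mem_filter, Finset.mem_range]
      rw [hcol (l + 1) (by omega)]
      by_cases hl : l + 1 ≤ n₁
      · rw [if_pos hl]
        constructor
        · intro _; omega
        · intro _; exact ⟨by omega, by omega⟩
      · rw [if_neg hl]
        have hle := card_filter_fin_le (fun l' : Fin n₁ => l + 1 ≤ n₁ + 1 + b l')
        constructor
        · rintro ⟨-, h2⟩; omega
        · intro; omega
    rw [heq, Finset.card_range]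
  refine ⟨by rw [hP]; exact Mb_mem_le n n₁ h b hbn, hcard, hdur, ?_⟩
  intro l hl1 hln
  have hcl : colLen P l = n₁ + extb n₁ b (l - 1) := by rw [hcol l hl1, if_pos hln]
  have hclN : n₁ + extb n₁ b (l - 1) ≤ N := by
    rw [← hcl]; exact le_trans (colLen_le_card P l) (card_le_N P)
  have hrow : rowLen P l = n₁ + extb n₁ b (l - 1) + 1 := by
    rw [rowLen]
    have heq : ((Finset.range (N + 1)).filter fun m => l ≤ colLen P (m + 1))
        = Finset.range (n₁ + extb n₁ b (l - 1) + 1) := by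
      ext m
      simp only [Finset.mem_filter, Finset.mem_range]
      rw [hcol (m + 1) (by omega)]
      by_cases hm : m + 1 ≤ n₁
      · rw [if_pos hm]
        constructor
        · intro _; omega
        · intro _; exact ⟨by omega, by omega⟩
      · rw [if_neg hm]
        have hcongr : (Finset.univ.filter fun l' : Fin n₁ => m + 1 ≤ n₁ + 1 + b l')
            = Finset.univ.filter fun l' : Fin n₁ => m - n₁ ≤ b l' := by
          ext l'
          simp only [Finset.mem_filter, Finset.mem_univ, true_and]
          omega
        rw [hcongr, anti_count hb hl1 hln]
        constructor
        · rintro ⟨-, h2⟩; omega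
        · intro hmm; exact ⟨by omega, by omega⟩
    rw [heq, Finset.card_range]
  rw [srank, hrow, hcl]
  push_cast
  ring

lemma backward (n n₁ N : ℕ) (h : n₁ ≤ n) (p : Nat.Partition N)
    (hbox : ∀ x ∈ p.parts, x ≤ n + 1) (hcard : Multiset.card p.parts ≤ n)
    (hdur : durfee p = n₁) (hrank : ∀ l, 1 ≤ l → l ≤ n₁ → srank p l = 1) :
    ∃ b : Fin n₁ → ℕ, Antitone b ∧ (∀ l, b l ≤ n - n₁) ∧
      (N = n₁ * (n₁ + 1) + 2 * ∑ l, b l) ∧ Mb n n₁ b = p.parts := by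
  have hScard : ((Finset.range (N + 1)).filter fun l => l + 1 ≤ colLen p (l + 1)).card = n₁ := by
    rw [← durfee_eq p]; exact hdur
  have hmem : ∀ k, (k < N + 1 ∧ k + 1 ≤ colLen p (k + 1)) ↔ k < n₁ := by
    intro k
    have hdc : ∀ l ∈ (Finset.range (N + 1)).filter (fun l => l + 1 ≤ colLen p (l + 1)),
        ∀ l' ≤ l, l' ∈ (Finset.range (N + 1)).filter (fun l => l + 1 ≤ colLen p (l + 1)) := by
      intro l hl l' hl'
      simp only [Finset.mem_filter, Finset.mem_range] at hl ⊢
      refine ⟨by omega, ?_⟩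
      calc l' + 1 ≤ l + 1 := by omega
        _ ≤ colLen p (l + 1) := hl.2
        _ ≤ colLen p (l' + 1) := colLen_anti p (by omega)
    have := downclosed _ hdc k
    rw [hScard] at this
    simpa [Finset.mem_filter, Finset.mem_range] using this
  have hA : ∀ m, 1 ≤ m → m ≤ n₁ → n₁ ≤ colLen p m := by
    intro m hm1 hmn
    have h2 := (hmem (n₁ - 1)).mpr (by omega)
    calc n₁ = n₁ - 1 + 1 := by omega
      _ ≤ colLen p (n₁ - 1 + 1) := h2.2
      _ ≤ colLen p m := colLen_anti p (by omega)
  have hB : ∀ m, n₁ < m → colLen p m ≤ n₁ := by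
    intro m hm
    by_cases hN : n₁ < N + 1
    · have h2 : ¬ (n₁ + 1 ≤ colLen p (n₁ + 1)) := fun hc =>
        absurd ((hmem n₁).mp ⟨hN, hc⟩) (lt_irrefl n₁)
      calc colLen p m ≤ colLen p (n₁ + 1) := colLen_anti p (by omega)
        _ ≤ n₁ := by omega
    · rw [colLen_eq_zero p (show N < m by omega)]; omega
  set b : Fin n₁ → ℕ := fun l => colLen p ((l : ℕ) + 1) - n₁ with hbdef
  have hbv : ∀ l : Fin n₁, n₁ + b l = colLen p ((l : ℕ) + 1) := by
    intro l
    have h1 := hA ((l : ℕ) + 1) (by omega) (by omega)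
    simp only [hbdef]
    omega
  have hb : Antitone b := by
    intro a c hac
    have h1 : (a : ℕ) ≤ (c : ℕ) := hac
    have h2 := colLen_anti p (show (a : ℕ) + 1 ≤ (c : ℕ) + 1 by omega)
    simp only [hbdef]
    omega
  have hbn : ∀ l, b l ≤ n - n₁ := by
    intro l
    have h1 : colLen p ((l : ℕ) + 1) ≤ Multiset.card p.parts := colLen_le_card p _
    simp only [hbdef]
    omega
  have hext : ∀ m, 1 ≤ m → m ≤ n₁ → n₁ + extb n₁ b (m - 1) = colLen p m := by
    intro m hm1 hmn
    have h1 : m - 1 < n₁ := by omega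
    rw [extb, dif_pos h1]
    have h2 := hbv ⟨m - 1, h1⟩
    rw [show ((⟨m - 1, h1⟩ : Fin n₁) : ℕ) + 1 = m by show m - 1 + 1 = m; omega] at h2
    exact h2
  have hrow : ∀ l, 1 ≤ l → l ≤ n₁ → rowLen p l = colLen p l + 1 := by
    intro l h1 h2
    have h3 := hrank l h1 h2
    rw [srank] at h3
    omega
  have hiii : ∀ m, n₁ < m → colLen p m
      = (Finset.univ.filter fun l : Fin n₁ => m ≤ n₁ + 1 + b l).card := by
    intro m hm
    have hC : colLen p m ≤ n₁ := hB m hm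
    have heq : (Finset.univ.filter fun l : Fin n₁ => m ≤ n₁ + 1 + b l)
        = Finset.univ.filter fun l : Fin n₁ => (l : ℕ) < colLen p m := by
      ext l
      simp only [Finset.mem_filter, Finset.mem_univ, true_and]
      have hdua : m ≤ rowLen p ((l : ℕ) + 1) ↔ (l : ℕ) + 1 ≤ colLen p m :=
        duality p (by omega) (by omega)
      have hr := hrow ((l : ℕ) + 1) (by omega) (by omega)
      have hv := hbv l
      constructor
      · intro hx
        have := hdua.mp (by omega)
        omega
      · intro hx
        have := hdua.mpr (by omega)
        omega
    rw [heq, card_fin_lt n₁ _ hC]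
  have hsum : N = n₁ * (n₁ + 1) + 2 * ∑ l, b l := by
    have hS := sum_colLen p
    have hn₁N1 : n₁ ≤ N + 1 := by
      rcases Nat.eq_zero_or_pos n₁ with h0 | h0
      · omega
      · have := (hmem (n₁ - 1)).mpr (by omega)
        omega
    rw [show N + 1 = n₁ + (N + 1 - n₁) by omega, Finset.sum_range_add] at hS
    have h1 : ∑ m ∈ Finset.range n₁, colLen p (m + 1) = n₁ * n₁ + ∑ l, b l := by
      have hstep : ∀ m ∈ Finset.range n₁, colLen p (m + 1) = n₁ + extb n₁ b m := by
        intro m hm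
        rw [Finset.mem_range] at hm
        rw [← hext (m + 1) (by omega) (by omega), Nat.add_sub_cancel]
      rw [Finset.sum_congr rfl hstep, Finset.sum_add_distrib, Finset.sum_const,
        Finset.card_range, smul_eq_mul]
      congr 1
      rw [← Fin.sum_univ_eq_sum_range (fun m => extb n₁ b m) n₁]
      apply Finset.sum_congr rfl
      intro l _
      rw [extb, dif_pos l.isLt]
    have h2 : ∑ i ∈ Finset.range (N + 1 - n₁), colLen p (n₁ + i + 1) = n₁ + ∑ l, b l := by
      have hstep : ∀ i ∈ Finset.range (N + 1 - n₁), colLen p (n₁ + i + 1)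
          = (Finset.univ.filter fun l : Fin n₁ => i ≤ b l).card := by
        intro i hi
        rw [hiii (n₁ + i + 1) (by omega)]
        congr 1
        ext l
        simp only [Finset.mem_filter, Finset.mem_univ, true_and]
        omega
      rw [Finset.sum_congr rfl hstep, swap_count (Finset.range (N + 1 - n₁)) (fun l j => j ≤ b l)]
      have hterm : ∀ l : Fin n₁,
          ((Finset.range (N + 1 - n₁)).filter fun i => i ≤ b l).card = b l + 1 := by
        intro l
        have hbl : n₁ + b l ≤ N := by
          have hv := hbv l
          have h1 := colLen_le_card p ((l : ℕ) + 1)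
          have h2 := card_le_N p
          omega
        have : (Finset.range (N + 1 - n₁)).filter (fun i => i ≤ b l) = Finset.range (b l + 1) := by
          ext i
          simp only [Finset.mem_filter, Finset.mem_range]
          omega
        rw [this, Finset.card_range]
      rw [Finset.sum_congr rfl (fun l _ => hterm l), Finset.sum_add_distrib, Finset.sum_const,
        Finset.card_univ, Fintype.card_fin, smul_eq_mul, mul_one, add_comm]
    rw [h1, h2] at hS
    have he : n₁ * (n₁ + 1) = n₁ * n₁ + n₁ := by ring
    linarith
  refine ⟨b, hb, hbn, hsum, ?_⟩
  have hsum2 : (Mb n n₁ b).sum = N := by rw [Mb_sum n n₁ h b hbn]; omega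
  have hPp : (⟨Mb n n₁ b, Mb_pos n n₁ b, hsum2⟩ : Nat.Partition N) = p := by
    apply parts_ext
    intro m hm
    have hc := Mb_card_filter n n₁ h b hb hbn (m := m) hm
    show (Multiset.filter (fun x => m ≤ x) (Mb n n₁ b)).card = colLen p m
    rw [hc]
    by_cases hmn : m ≤ n₁
    · rw [if_pos hmn, hext m hm hmn]
    · rw [if_neg hmn, ← hiii m (by omega)]
  exact congrArg Nat.Partition.parts hPp

/-- Case `k = 2, i = 1` of the second main bijection: partitions
`N = n₁(n₁+1) + 2(b₁ + ⋯ + b_{n₁})` with `n - n₁ ≥ b₁ ≥ ⋯ ≥ b_{n₁} ≥ 0` are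
equinumerous with partitions of `N` in an `(n+1) × n` box with exactly `n₁`
diagonal hooks and all successive ranks equal to `1`. -/
theorem bijection_Q31 (n n₁ N : ℕ) (h : n₁ ≤ n) :
    Nat.card {b : Fin n₁ → ℕ //
        Antitone b ∧ (∀ p, b p ≤ n - n₁) ∧ N = n₁ * (n₁ + 1) + 2 * ∑ p, b p} =
      Nat.card {p : Nat.Partition N //
        (∀ x ∈ p.parts, x ≤ n + 1) ∧ Multiset.card p.parts ≤ n ∧
        durfee p = n₁ ∧
        ∀ l, 1 ≤ l → l ≤ n₁ → srank p l = 1} := by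
  have hsum2 : ∀ x : {b : Fin n₁ → ℕ //
      Antitone b ∧ (∀ p, b p ≤ n - n₁) ∧ N = n₁ * (n₁ + 1) + 2 * ∑ p, b p},
      (Mb n n₁ x.1).sum = N := fun x => by
    rw [Mb_sum n n₁ h x.1 x.2.2.1]; exact x.2.2.2.symm
  refine Nat.card_eq_of_bijective (fun x =>
    ⟨⟨Mb n n₁ x.1, Mb_pos n n₁ x.1, hsum2 x⟩,
      forward_props n n₁ N h x.1 x.2.1 x.2.2.1 x.2.2.2
        ⟨Mb n n₁ x.1, Mb_pos n n₁ x.1, hsum2 x⟩ rfl⟩) ⟨?_, ?_⟩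
  · intro x y hxy
    have hparts : Mb n n₁ x.1 = Mb n n₁ y.1 := by
      have := congrArg (fun z : {p : Nat.Partition N //
        (∀ x ∈ p.parts, x ≤ n + 1) ∧ Multiset.card p.parts ≤ n ∧
        durfee p = n₁ ∧ ∀ l, 1 ≤ l → l ≤ n₁ → srank p l = 1} => z.1.parts) hxy
      exact this
    apply Subtype.ext
    funext l
    have h1 := Mb_card_filter n n₁ h x.1 x.2.1 x.2.2.1 (m := (l : ℕ) + 1) (by omega)
    have h2 := Mb_card_filter n n₁ h y.1 y.2.1 y.2.2.1 (m := (l : ℕ) + 1) (by omega)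
    rw [hparts] at h1
    have hln : (l : ℕ) + 1 ≤ n₁ := l.isLt
    rw [if_pos hln] at h1 h2
    have hex1 : extb n₁ x.1 ((l : ℕ) + 1 - 1) = x.1 l := by
      rw [Nat.add_sub_cancel, extb, dif_pos l.isLt]
    have hex2 : extb n₁ y.1 ((l : ℕ) + 1 - 1) = y.1 l := by
      rw [Nat.add_sub_cancel, extb, dif_pos l.isLt]
    rw [hex1] at h1
    rw [hex2] at h2
    omega
  · intro y
    obtain ⟨b, hb, hbn, hsum, hMb⟩ :=
      backward n n₁ N h y.1 y.2.1 y.2.2.1 y.2.2.2.1 y.2.2.2.2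
    refine ⟨⟨b, hb, hbn, hsum⟩, ?_⟩
    exact Subtype.ext (partition_ext _ _ hMb)
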